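/- arXiv:1503.06367 — 3 statements merged into one kernel-verified Lean document; each statement's English description precedes it below -/
import Mathlib

section
/- Fix positive integers k and define, for a \geq 0 and c \geq 0, g_{k,c}(a) = [q^{\lfloor ak/2 \rfloor - c}] \binom{a+k}{k}_q. Then for each fixed k and c, the function a \mapsto g_{k,c}(a) is a quasipolynomial in a, i.e., there exist a period N and polynomials p_0, ..., p_{N-1} such that g_{k,c}(a) = p_{a mod N}(a) for all sufficiently large a. -/
open Polynomial Finset

noncomputable section

namespace GMCaux
/-- k-th finite difference of a polynomial of degree < k vanishes. -/
lemma diff_poly_zero : ∀ (k : ℕ) (Q : Polynomial ℚ), Q.degree < (k : WithBot ℕ) →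
    ∀ x : ℚ, ∑ j ∈ Finset.range (k+1), (-1:ℚ)^j * (k.choose j) * Q.eval (x + j) = 0 := by
  intro k
  induction k with
  | zero =>
    intro Q hQ x
    have : Q = 0 := by
      rw [← Polynomial.degree_eq_bot]
      exact Nat.WithBot.lt_zero_iff.mp (by exact_mod_cast hQ)
    simp [this]
  | succ k ih =>
    intro Q hQ x
    set Qs : Polynomial ℚ := Q.comp (X + 1) with hQs
    have hQse : ∀ y : ℚ, Qs.eval y = Q.eval (y + 1) := by
      intro y; simp [hQs, Polynomial.eval_comp]
    have hX1 : ((X : Polynomial ℚ) + 1).natDegree = 1 := by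
      simpa using Polynomial.natDegree_X_add_C (1 : ℚ)
    have hdeg : (Qs - Q).degree < (k : WithBot ℕ) := by
      by_cases h0 : Qs - Q = 0
      · rw [h0, Polynomial.degree_zero]; exact WithBot.bot_lt_coe _
      · by_cases hQ0 : Q = 0
        · exfalso; apply h0; simp [hQs, hQ0]
        have hlc : Qs.leadingCoeff = Q.leadingCoeff := by
          rw [hQs, Polynomial.leadingCoeff_comp (by rw [hX1]; exact one_ne_zero)]
          have hl1 : ((X : Polynomial ℚ) + 1).leadingCoeff = 1 := by
            simpa using Polynomial.leadingCoeff_X_add_C (1 : ℚ)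
          rw [hl1, one_pow, mul_one]
        have hQs0 : Qs ≠ 0 := by
          intro h
          apply hQ0
          rw [← Polynomial.leadingCoeff_eq_zero, ← hlc, h, Polynomial.leadingCoeff_zero]
        have hdc : Qs.degree = Q.degree := by
          rw [Polynomial.degree_eq_natDegree hQs0, Polynomial.degree_eq_natDegree hQ0]
          congr 1
          rw [hQs, Polynomial.natDegree_comp, hX1, mul_one]
        have h1 : (Qs - Q).degree < Q.degree := by
          have := Polynomial.degree_sub_lt hdc hQs0 hlc
          rwa [hdc] at this
        have h2 : Q.degree ≤ (k : WithBot ℕ) := by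
          have h3 : Q.natDegree < k + 1 := by
            have := Polynomial.degree_eq_natDegree hQ0 ▸ hQ
            exact_mod_cast this
          exact Polynomial.degree_le_of_natDegree_le (by omega)
        exact lt_of_lt_of_le h1 h2
    have ihd := ih (Qs - Q) hdeg x
    set g : ℕ → ℚ := fun j => (-1:ℚ)^j * (k.choose j) * Q.eval (x + j) with hg
    rw [Finset.sum_range_succ']
    have expand : ∀ j ∈ Finset.range (k+1),
        (-1:ℚ)^(j+1) * (((k+1).choose (j+1) : ℕ) : ℚ) * Q.eval (x + ((j+1 : ℕ) : ℚ))
        = (g (j+1) - g j) - ((-1:ℚ)^j * (k.choose j) * (Qs - Q).eval (x + j)) := by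
      intro j _
      have h1 : (Qs - Q).eval (x + j) = Q.eval (x + j + 1) - Q.eval (x + j) := by
        rw [Polynomial.eval_sub, hQse]
      have h2 : (((k+1).choose (j+1) : ℕ) : ℚ) = (k.choose j) + (k.choose (j+1)) := by
        rw [Nat.choose_succ_succ]; push_cast; ring
      rw [h1, h2, hg]
      push_cast
      ring
    rw [Finset.sum_congr rfl expand, Finset.sum_sub_distrib, Finset.sum_range_sub g, ihd,
      sub_zero]
    have hgk : g (k+1) = 0 := by
      simp [hg, Nat.choose_eq_zero_of_lt (by omega : k < k + 1)]
    rw [hgk]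
    simp [hg]
lemma newton_poly (k : ℕ) (h : ℕ → ℚ) (M : ℕ)
    (H : ∀ m, M ≤ m → ∑ j ∈ Finset.range (k+1), (-1:ℚ)^j * (k.choose j) * h (m + j) = 0) :
    ∃ P : Polynomial ℚ, ∀ m, M ≤ m → h m = P.eval (m : ℚ) := by
  rcases Nat.eq_zero_or_pos k with hk | hk
  · subst hk
    refine ⟨0, fun m hm => ?_⟩
    have := H m hm
    simpa using this
  -- Lagrange interpolation through the first k values
  set v : ℕ → ℚ := fun i => ((M + i : ℕ) : ℚ) with hv
  have hinj : Set.InjOn v (Finset.range k : Set ℕ) := by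
    intro a _ b _ hab
    have : ((M + a : ℕ) : ℚ) = ((M + b : ℕ) : ℚ) := hab
    have : M + a = M + b := by exact_mod_cast this
    omega
  set P : Polynomial ℚ := Lagrange.interpolate (Finset.range k) v (fun i => h (M + i)) with hP
  have hPdeg : P.degree < (k : WithBot ℕ) := by
    have := Lagrange.degree_interpolate_lt (fun i => h (M + i)) hinj
    rw [hP]
    simpa using this
  have hnode : ∀ i, i < k → h (M + i) = P.eval ((M + i : ℕ) : ℚ) := by
    intro i hi
    have := Lagrange.eval_interpolate_at_node (fun i => h (M + i)) hinj
      (Finset.mem_range.mpr hi)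
    exact this.symm
  refine ⟨P, ?_⟩
  -- strong induction on m
  intro m
  induction m using Nat.strong_induction_on with
  | _ m ihm =>
    intro hm
    by_cases hsmall : m < M + k
    · have : m - M < k := by omega
      have := hnode (m - M) this
      rw [Nat.add_sub_cancel' hm] at this
      exact this
    · push_neg at hsmall
      -- use recurrence at base m - k
      have hb : M ≤ m - k := by omega
      have hrec := H (m - k) hb
      have hrecP := diff_poly_zero k P hPdeg ((m - k : ℕ) : ℚ)
      -- split off last term of both sums
      rw [Finset.sum_range_succ] at hrec hrecP
      have hih : ∀ j ∈ Finset.range k,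
          (-1:ℚ)^j * (k.choose j) * h (m - k + j)
          = (-1:ℚ)^j * (k.choose j) * P.eval (((m - k : ℕ) : ℚ) + j) := by
        intro j hj
        have hjk : j < k := Finset.mem_range.mp hj
        have h1 : h (m - k + j) = P.eval ((m - k + j : ℕ) : ℚ) :=
          ihm (m - k + j) (by omega) (by omega)
        rw [h1]
        congr 1
        push_cast
        ring
      rw [Finset.sum_congr rfl hih] at hrec
      have hfin : (-1:ℚ)^k * (k.choose k) * h (m - k + k)
          = (-1:ℚ)^k * (k.choose k) * P.eval (((m - k : ℕ) : ℚ) + k) := by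
        have := hrec.trans hrecP.symm
        linarith [this]
      have hne : (-1:ℚ)^k * (k.choose k) ≠ 0 := by
        simp [Nat.choose_self]
      have hc : h (m - k + k) = P.eval (((m - k : ℕ) : ℚ) + k) := mul_left_cancel₀ hne hfin
      have hmk : m - k + k = m := by omega
      rw [hmk] at hc
      rw [hc]
      congr 1
      have : ((m - k : ℕ) : ℚ) = (m : ℚ) - k := by
        push_cast [Nat.cast_sub (by omega : k ≤ m)]
        ring
      rw [this]
      ring
def LL (k : ℕ) : ℕ := k.factorial

def up (k : ℕ) : Polynomial ℚ := ∏ i ∈ Finset.range k, (1 - Polynomial.X ^ (i+1))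

def wp (k : ℕ) : Polynomial ℚ :=
  ∏ i ∈ Finset.range k, (∑ j ∈ Finset.range (LL k / (i+1)), Polynomial.X ^ ((i+1)*j))

def uu (k : ℕ) : PowerSeries ℚ := (up k : PowerSeries ℚ)

def pe (k : ℕ) (z : ℤ) : ℚ :=
  if 0 ≤ z then PowerSeries.coeff (R := ℚ) z.toNat (uu k)⁻¹ else 0

lemma LL_pos (k : ℕ) : 0 < LL k := Nat.factorial_pos k

lemma up_mul_wp (k : ℕ) : up k * wp k = (1 - Polynomial.X ^ (LL k))^k := by
  rw [up, wp, ← Finset.prod_mul_distrib]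
  have : ∀ i ∈ Finset.range k,
      ((1 : Polynomial ℚ) - Polynomial.X ^ (i+1)) *
        (∑ j ∈ Finset.range (LL k / (i+1)), (Polynomial.X : Polynomial ℚ) ^ ((i+1)*j))
      = 1 - Polynomial.X ^ (LL k) := by
    intro i hi
    have hdvd : (i+1) ∣ LL k := Nat.dvd_factorial (by omega) (Finset.mem_range.mp hi)
    have hmul : (i+1) * (LL k / (i+1)) = LL k := Nat.mul_div_cancel' hdvd
    have hgeom := geom_sum_mul (Polynomial.X ^ (i+1) : Polynomial ℚ) (LL k / (i+1))
    have hxp : ∀ j, (Polynomial.X ^ (i+1) : Polynomial ℚ) ^ j = Polynomial.X ^ ((i+1)*j) := by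
      intro j; rw [← pow_mul]
    calc (1 - Polynomial.X ^ (i+1)) * (∑ j ∈ Finset.range (LL k / (i+1)), Polynomial.X ^ ((i+1)*j))
        = -((∑ j ∈ Finset.range (LL k / (i+1)), (Polynomial.X ^ (i+1) :
            Polynomial ℚ) ^ j) * (Polynomial.X ^ (i+1) - 1)) := by
          simp only [hxp]; ring
      _ = -((Polynomial.X ^ (i+1) : Polynomial ℚ) ^ (LL k / (i+1)) - 1) := by rw [hgeom]
      _ = 1 - Polynomial.X ^ (LL k) := by rw [← pow_mul, hmul]; ring
  rw [Finset.prod_congr rfl this, Finset.prod_const, Finset.card_range]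

lemma constcoeff_u (k : ℕ) : PowerSeries.constantCoeff (R := ℚ) (uu k) = 1 := by
  rw [uu, ← PowerSeries.coeff_zero_eq_constantCoeff_apply, Polynomial.coeff_coe,
    Polynomial.coeff_zero_eq_eval_zero, up, Polynomial.eval_prod]
  simp

lemma u_mul_inv (k : ℕ) : uu k * (uu k)⁻¹ = 1 :=
  PowerSeries.mul_inv_cancel _ (by rw [constcoeff_u]; exact one_ne_zero)

lemma winv (k : ℕ) :
    (1 - PowerSeries.X ^ (LL k))^k * (uu k)⁻¹ = ((wp k : Polynomial ℚ) : PowerSeries ℚ) := by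
  have h1 : uu k * ((wp k : Polynomial ℚ) : PowerSeries ℚ)
      = (1 - PowerSeries.X ^ (LL k))^k := by
    rw [uu, ← Polynomial.coe_mul, up_mul_wp]
    push_cast [Polynomial.coe_pow, Polynomial.coe_sub, Polynomial.coe_one, Polynomial.coe_X]
    norm_cast
  calc (1 - PowerSeries.X ^ (LL k))^k * (uu k)⁻¹
      = uu k * ((wp k : Polynomial ℚ) : PowerSeries ℚ) * (uu k)⁻¹ := by rw [h1]
    _ = ((wp k : Polynomial ℚ) : PowerSeries ℚ) * (uu k * (uu k)⁻¹) := by ring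
    _ = _ := by rw [u_mul_inv]; ring

lemma coeff_X_pow_mul_inv (k E n : ℕ) :
    PowerSeries.coeff (R := ℚ) n (PowerSeries.X ^ E * (uu k)⁻¹) = pe k ((n : ℤ) - E) := by
  rw [PowerSeries.coeff_X_pow_mul', pe]
  by_cases h : E ≤ n
  · rw [if_pos h, if_pos (by omega : (0:ℤ) ≤ (n:ℤ) - E)]
    have : ((n:ℤ) - E).toNat = n - E := by omega
    rw [this]
  · rw [if_neg h, if_neg (by omega)]

lemma pe_rec (k : ℕ) (n : ℕ) (hn : (wp k).natDegree < n) :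
    ∑ j ∈ Finset.range (k+1), (-1:ℚ)^j * (k.choose j) * pe k ((n:ℤ) - (LL k) * j) = 0 := by
  have h0 : PowerSeries.coeff (R := ℚ) n ((1 - PowerSeries.X ^ (LL k))^k * (uu k)⁻¹) = 0 := by
    rw [winv, Polynomial.coeff_coe]
    exact Polynomial.coeff_eq_zero_of_natDegree_lt hn
  have hexp : (1 - PowerSeries.X ^ (LL k) : PowerSeries ℚ)^k
      = ∑ j ∈ Finset.range (k+1),
        PowerSeries.C (R := ℚ) ((-1:ℚ)^j * (k.choose j)) * PowerSeries.X ^ (LL k * j) := by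
    have : (1 - PowerSeries.X ^ (LL k) : PowerSeries ℚ) = (-(PowerSeries.X ^ (LL k)) + 1) := by
      ring
    rw [this, add_pow]
    apply Finset.sum_congr rfl
    intro j hj
    rw [neg_pow, one_pow, mul_one, ← pow_mul]
    have hC : ((k.choose j : ℕ) : PowerSeries ℚ) = PowerSeries.C (R := ℚ) (k.choose j) := by
      rw [← map_natCast (PowerSeries.C (R := ℚ))]
    have hneg : ((-1 : PowerSeries ℚ))^j = PowerSeries.C (R := ℚ) ((-1:ℚ)^j) := by
      rw [map_pow, map_neg, map_one]
    rw [hC, hneg, map_mul]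
    ring
  rw [hexp, Finset.sum_mul, map_sum] at h0
  rw [← h0]
  apply Finset.sum_congr rfl
  intro j hj
  apply Eq.symm
  rw [mul_assoc, PowerSeries.coeff_C_mul, coeff_X_pow_mul_inv]
  have : ((n:ℤ) - ((LL k * j : ℕ) : ℤ)) = (n:ℤ) - (LL k) * j := by push_cast; ring
  rw [this]

lemma pe_neg (k : ℕ) (z : ℤ) (h : z < 0) : pe k z = 0 := by
  rw [pe, if_neg (by omega)]

lemma neg_one_pow_helper (j k : ℕ) (h : j ≤ k) : (-1:ℚ)^k * (-1:ℚ)^(k-j) = (-1:ℚ)^j := by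
  have h1 : (-1:ℚ)^k * (-1:ℚ)^(k-j) * (-1:ℚ)^j = 1 := by
    rw [← pow_add, ← pow_add]
    have : k + (k - j) + j = 2*k := by omega
    rw [this, pow_mul]
    norm_num
  have h2 : (-1:ℚ)^j * (-1:ℚ)^j = 1 := by
    rw [← pow_add, ← two_mul, pow_mul]
    norm_num
  have h3 : ((-1:ℚ)^j) ≠ 0 := by
    intro h
    rw [h, mul_zero] at h2
    norm_num at h2
  field_simp at h1 h2 ⊢
  calc (-1:ℚ)^k * (-1:ℚ)^(k-j) = ((-1:ℚ)^k * (-1:ℚ)^(k-j) * (-1:ℚ)^j) * ((-1:ℚ)^j)⁻¹ := by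
        field_simp
    _ = ((-1:ℚ)^j * (-1:ℚ)^j) * ((-1:ℚ)^j)⁻¹ := by rw [h1, ← pow_two, h2]
    _ = (-1:ℚ)^j := by field_simp

/-- `pe k` is eventually quasipolynomial with period `LL k`. -/
lemma pe_qp (k : ℕ) : ∃ (P : ℕ → Polynomial ℚ) (A₀ : ℕ), ∀ n : ℕ, A₀ ≤ n →
    pe k (n : ℤ) = (P (n % LL k)).eval (n : ℚ) := by
  set L := LL k with hL
  have hLpos : 0 < L := LL_pos k
  set M := (wp k).natDegree + 1 with hM
  -- each residue class is eventually polynomial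
  have key : ∀ r : ℕ, ∃ P : Polynomial ℚ, ∀ m, M ≤ m → pe k ((r + m * L : ℕ) : ℤ)
      = P.eval (m : ℚ) := by
    intro r
    apply newton_poly k (fun m => pe k ((r + m * L : ℕ) : ℤ)) M
    intro m hm
    have hrec := pe_rec k (r + (m + k) * L) (by
      have h2 : m + k ≤ (m + k) * L := Nat.le_mul_of_pos_right _ hLpos
      omega)
    set f : ℕ → ℚ := fun j => (-1:ℚ)^j * (k.choose j) *
      pe k (((r + (m + k) * L : ℕ) : ℤ) - (L : ℤ) * j) with hf
    have hrefl : ∑ j ∈ Finset.range (k+1), f (k + 1 - 1 - j) = 0 := by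
      rw [Finset.sum_range_reflect]
      exact hrec
    calc ∑ j ∈ Finset.range (k+1), (-1:ℚ)^j * (k.choose j) * pe k ((r + (m+j) * L : ℕ) : ℤ)
        = ∑ j ∈ Finset.range (k+1), (-1:ℚ)^k * f (k + 1 - 1 - j) := by
          apply Finset.sum_congr rfl
          intro j hj
          have hjk : j ≤ k := by have := Finset.mem_range.mp hj; omega
          have e1 : k + 1 - 1 - j = k - j := by omega
          rw [e1, hf]
          simp only []
          have harg : ((r + (m + k) * L : ℕ) : ℤ) - (L:ℤ) * ((k - j : ℕ) : ℤ)
              = ((r + (m + j) * L : ℕ) : ℤ) := by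
            push_cast [Nat.cast_sub hjk]
            ring
          rw [harg, Nat.choose_symm hjk]
          rw [show ((-1:ℚ)^k * ((-1:ℚ)^(k-j) * ((k.choose j : ℚ)) *
            pe k ((r + (m + j) * L : ℕ) : ℤ))) = ((-1:ℚ)^k * (-1:ℚ)^(k-j)) * ((k.choose j : ℚ)) *
            pe k ((r + (m + j) * L : ℕ) : ℤ) from by ring]
          rw [neg_one_pow_helper j k hjk]
      _ = (-1:ℚ)^k * ∑ j ∈ Finset.range (k+1), f (k + 1 - 1 - j) := by
          rw [Finset.mul_sum]
      _ = 0 := by rw [hrefl, mul_zero]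
  choose P hP using key
  refine ⟨fun r => (P r).comp (Polynomial.C ((L:ℚ))⁻¹ * (Polynomial.X - Polynomial.C (r:ℚ))),
    (M+1)*L, ?_⟩
  intro n hn
  have hm : M + 1 ≤ n / L := (Nat.le_div_iff_mul_le hLpos).mpr hn
  have hn' : n % L + (n / L) * L = n := Nat.mod_add_div' n L
  have h1 := hP (n % L) (n / L) (by omega : M ≤ n / L)
  rw [hn'] at h1
  rw [h1, Polynomial.eval_comp]
  congr 1
  have hcast : ((n:ℚ)) = ((n % L : ℕ) : ℚ) + ((n / L : ℕ) : ℚ) * L := by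
    exact_mod_cast congrArg (Nat.cast : ℕ → ℚ) hn'.symm
  rw [Polynomial.eval_mul, Polynomial.eval_C, Polynomial.eval_sub, Polynomial.eval_X,
    Polynomial.eval_C, hcast]
  have hLne : ((L:ℚ)) ≠ 0 := by exact_mod_cast hLpos.ne'
  field_simp
  ring

def IsEQP (f : ℕ → ℚ) : Prop :=
  ∃ N : ℕ, 1 ≤ N ∧ ∃ p : ℕ → Polynomial ℚ, ∃ A : ℕ, ∀ a, A ≤ a → f a = (p (a % N)).eval (a : ℚ)

lemma eqp_of_eventually_zero (f : ℕ → ℚ) (A : ℕ) (h : ∀ a, A ≤ a → f a = 0) : IsEQP f :=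
  ⟨1, le_refl 1, fun _ => 0, A, fun a ha => by simp [h a ha]⟩

lemma eqp_add (f g : ℕ → ℚ) (hf : IsEQP f) (hg : IsEQP g) : IsEQP (fun a => f a + g a) := by
  obtain ⟨N1, hN1, p1, A1, h1⟩ := hf
  obtain ⟨N2, hN2, p2, A2, h2⟩ := hg
  refine ⟨N1 * N2, Nat.one_le_iff_ne_zero.mpr (by positivity), fun r => p1 (r % N1) + p2 (r % N2),
    max A1 A2, fun a ha => ?_⟩
  have d1 : a % (N1 * N2) % N1 = a % N1 := Nat.mod_mod_of_dvd a ⟨N2, rfl⟩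
  have d2 : a % (N1 * N2) % N2 = a % N2 := Nat.mod_mod_of_dvd a ⟨N1, mul_comm N1 N2⟩
  rw [Polynomial.eval_add, d1, d2, ← h1 a (le_trans (le_max_left _ _) ha),
    ← h2 a (le_trans (le_max_right _ _) ha)]

lemma eqp_sum {ι : Type*} [DecidableEq ι] (T : Finset ι) (F : ι → ℕ → ℚ)
    (h : ∀ i ∈ T, IsEQP (F i)) : IsEQP (fun a => ∑ i ∈ T, F i a) := by
  induction T using Finset.induction_on with
  | empty => exact eqp_of_eventually_zero _ 0 (by simp)
  | @insert i T' hnot ih =>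
    simp only [Finset.sum_insert hnot]
    exact eqp_add _ _ (h i (Finset.mem_insert_self i T'))
      (ih fun j hj => h j (Finset.mem_insert_of_mem hj))

/-- The main per-term lemma: growing-argument case. -/
lemma term_eqp (k : ℕ) (c s t : ℕ) (hs2 : 2*s < k) :
    IsEQP (fun a => (-1:ℚ)^s * pe k (((a * k / 2 - c : ℕ) : ℤ) - ((s * a + t : ℕ) : ℤ))) := by
  obtain ⟨P, A₀, hP⟩ := pe_qp k
  set L := LL k with hLdef
  have hLpos : 0 < L := LL_pos k
  set N := 2 * L with hN
  set mI : ℕ → ℤ := fun r => ((r * k / 2 : ℕ) : ℤ) - c - (s*r + t) with hmI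
  set idx : ℕ → ℕ := fun r => ((mI r) % (L:ℤ)).toNat with hidx
  set δ : ℕ → ℕ := fun r => (r * k) % 2 with hδ
  refine ⟨N, by omega, fun r => Polynomial.C ((-1:ℚ)^s) *
      (P (idx r)).comp (Polynomial.C ((k:ℚ)/2 - s) * Polynomial.X +
        Polynomial.C (-((δ r : ℕ) : ℚ)/2 - c - t)),
    2*A₀ + 2*c + 2*t + 2, fun a ha => ?_⟩
  set r := a % N with hr
  set b := a / N with hb
  have hab : a = N * b + r := (Nat.div_add_mod a N).symm
  -- basic arithmetic facts
  have hdm : 2 * (a*k/2) + (a*k) % 2 = a * k := Nat.div_add_mod (a*k) 2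
  have hmod2 : (a*k) % 2 < 2 := Nat.mod_lt _ (by omega)
  have hmul : 2*(s*a) + a ≤ a*k := by
    calc 2*(s*a) + a = a * (2*s+1) := by ring
      _ ≤ a * k := Nat.mul_le_mul_left a (by omega)
  have hca : c ≤ a * k / 2 := by omega
  -- the integer argument
  set z : ℤ := ((a * k / 2 : ℕ) : ℤ) - ((c : ℕ) : ℤ) - ((s*a + t : ℕ) : ℤ) with hz
  have hzarg : ((a * k / 2 - c : ℕ) : ℤ) - ((s * a + t : ℕ) : ℤ) = z := by
    rw [Nat.cast_sub hca]
  have hz0 : 0 ≤ z := by simp only [hz]; omega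
  have hzA : (A₀ : ℤ) ≤ z := by simp only [hz]; omega
  set n : ℕ := z.toNat with hn
  have hzn : (n : ℤ) = z := Int.toNat_of_nonneg hz0
  have hnA : A₀ ≤ n := by omega
  -- residue computation
  have hak2 : a * k / 2 = r * k / 2 + L * b * k := by
    have h1 : a * k = r * k + 2 * (L * b * k) := by rw [hab, hN]; ring
    rw [h1, Nat.add_mul_div_left _ _ (by omega : 0 < 2)]
  have hdiv : z - mI r = (L : ℤ) * (b * k - 2 * (s * b)) := by
    simp only [hz, hmI]
    rw [hak2, hab, hN]
    push_cast
    ring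
  have hres : n % L = idx r := by
    have e0 : (z - mI r) % (L:ℤ) = 0 := by rw [hdiv]; exact Int.mul_emod_right _ _
    have e1 : (n:ℤ) % (L:ℤ) = mI r % (L:ℤ) := by
      rw [hzn]
      exact Int.emod_eq_emod_iff_emod_sub_eq_zero.mpr e0
    simp only [hidx]
    omega
  -- parity computation
  have hδa : (a*k) % 2 = δ r := by
    have h2N : a % N % 2 = a % 2 := Nat.mod_mod_of_dvd a ⟨L, hN⟩
    simp only [hδ, hr]
    apply Eq.symm
    rw [← Nat.mod_mul_mod, h2N, Nat.mod_mul_mod]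
  -- value of n as a rational
  have hdm' : 2*(a*k/2) + δ r = a*k := by rw [← hδa]; omega
  have hdmQ : 2*((a*k/2 : ℕ):ℚ) + ((δ r : ℕ):ℚ) = (a:ℚ)*(k:ℚ) := by exact_mod_cast hdm'
  have hz2 : (n:ℤ) = ((a * k / 2 : ℕ) : ℤ) - ((c:ℕ):ℤ) - ((s*a + t : ℕ):ℤ) := by rw [hzn]
  have hnQ : (n:ℚ) = ((a * k / 2 : ℕ):ℚ) - ((c:ℕ):ℚ) - ((s*a+t : ℕ):ℚ) := by exact_mod_cast hz2
  have hnQ2 : (n:ℚ) = ((k:ℚ)/2 - s) * a + (-((δ r : ℕ) : ℚ)/2 - c - t) := by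
    rw [hnQ]
    have hhalf : ((a*k/2 : ℕ):ℚ) = ((a:ℚ)*(k:ℚ) - ((δ r : ℕ):ℚ))/2 := by linarith
    rw [hhalf]
    push_cast
    ring
  -- final computation
  calc (-1:ℚ)^s * pe k (((a * k / 2 - c : ℕ) : ℤ) - ((s * a + t : ℕ) : ℤ))
      = (-1:ℚ)^s * pe k ((n:ℤ)) := by rw [hzarg, hzn]
    _ = (-1:ℚ)^s * (P (n % L)).eval (n:ℚ) := by rw [hP n hnA]
    _ = (-1:ℚ)^s * (P (idx r)).eval (n:ℚ) := by rw [hres]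
    _ = _ := by
        rw [Polynomial.eval_mul, Polynomial.eval_C, Polynomial.eval_comp, Polynomial.eval_add,
          Polynomial.eval_mul, Polynomial.eval_C, Polynomial.eval_X, Polynomial.eval_C, hnQ2]

def ψ : Polynomial ℤ →+* PowerSeries ℚ :=
  (Polynomial.coeToPowerSeries.ringHom).comp (Polynomial.mapRingHom (Int.castRingHom ℚ))

lemma ψ_coeff (p : Polynomial ℤ) (n : ℕ) :
    PowerSeries.coeff (R := ℚ) n (ψ p) = ((p.coeff n : ℤ) : ℚ) := by
  simp [ψ, Polynomial.coeff_coe]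

lemma ψ_X : ψ (Polynomial.X) = PowerSeries.X := by
  simp [ψ]

lemma ψ_up (k : ℕ) : ψ (∏ i ∈ Finset.range k, (1 - Polynomial.X ^ (i + 1))) = uu k := by
  rw [map_prod, uu, up]
  have : ((∏ i ∈ Finset.range k, (1 - Polynomial.X ^ (i+1)) : Polynomial ℚ) : PowerSeries ℚ)
      = ∏ i ∈ Finset.range k, ((1 : PowerSeries ℚ) - PowerSeries.X ^ (i+1)) := by
    rw [← Polynomial.coeToPowerSeries.ringHom_apply, map_prod]
    apply Finset.prod_congr rfl
    intro i _
    simp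
  rw [this]
  apply Finset.prod_congr rfl
  intro i _
  rw [map_sub, map_one, map_pow, ψ_X]

/-- The coefficient of the Gaussian binomial as a signed sum of `pe` values. -/
lemma coeff_eq_sum (k : ℕ) (G : ℕ → Polynomial ℤ)
    (hG : ∀ a, G a * ∏ i ∈ Finset.range k, (1 - Polynomial.X ^ (i + 1)) =
      ∏ i ∈ Finset.range k, (1 - Polynomial.X ^ (a + i + 1)))
    (a m : ℕ) :
    (((G a).coeff m : ℤ) : ℚ) = ∑ S ∈ (Finset.range k).powerset,
      (-1:ℚ)^S.card * pe k ((m:ℤ) - ((S.card * a + ∑ i ∈ S, (i+1) : ℕ) : ℤ)) := by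
  have h1 : ψ (G a) * uu k = ψ (∏ i ∈ Finset.range k, (1 - Polynomial.X ^ (a + i + 1))) := by
    rw [← ψ_up k, ← map_mul, hG a]
  have h2 : ψ (G a) = ψ (∏ i ∈ Finset.range k, (1 - Polynomial.X ^ (a + i + 1))) * (uu k)⁻¹ := by
    calc ψ (G a) = ψ (G a) * (uu k * (uu k)⁻¹) := by rw [u_mul_inv]; ring
      _ = (ψ (G a) * uu k) * (uu k)⁻¹ := by ring
      _ = _ := by rw [h1]
  have h3 : ψ (∏ i ∈ Finset.range k, (1 - Polynomial.X ^ (a + i + 1)))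
      = ∑ S ∈ (Finset.range k).powerset,
        PowerSeries.C (R := ℚ) ((-1:ℚ)^S.card) * PowerSeries.X ^ (S.card * a + ∑ i ∈ S, (i+1)) := by
    rw [map_prod]
    have hfac : ∀ i ∈ Finset.range k, ψ (1 - Polynomial.X ^ (a + i + 1))
        = (-(PowerSeries.X ^ (a + i + 1)) + 1 : PowerSeries ℚ) := by
      intro i _
      rw [map_sub, map_one, map_pow, ψ_X]
      ring
    rw [Finset.prod_congr rfl hfac, Finset.prod_add]
    apply Finset.sum_congr rfl
    intro S hS
    rw [Finset.prod_const_one, mul_one]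
    have : ∀ i ∈ S, -(PowerSeries.X ^ (a + i + 1) : PowerSeries ℚ)
        = PowerSeries.C (R := ℚ) (-1) * PowerSeries.X ^ (a + i + 1) := by
      intro i _
      simp
    have hsum : ∑ i ∈ S, (a+i+1) = S.card * a + ∑ i ∈ S, (i+1) := by
      rw [Finset.sum_congr rfl (fun i _ => (by ring : a + i + 1 = (i+1) + a)),
        Finset.sum_add_distrib, Finset.sum_const, smul_eq_mul]
      ring
    rw [Finset.prod_congr rfl this, Finset.prod_mul_distrib, Finset.prod_const,
      Finset.prod_pow_eq_pow_sum, hsum, ← map_pow]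
  rw [← ψ_coeff (G a) m, h2, h3, Finset.sum_mul, map_sum]
  apply Finset.sum_congr rfl
  intro S hS
  rw [mul_assoc, PowerSeries.coeff_C_mul, coeff_X_pow_mul_inv]


end GMCaux

end

/-- Coefficient of `q^n` in an integer polynomial, for `n : ℤ` (zero when `n < 0`). -/
def zcoeffZ (P : Polynomial ℤ) (n : ℤ) : ℤ :=
  if 0 ≤ n then P.coeff n.toNat else 0

/-- Fix `k ≥ 1` and `c ≥ 0`, and let
`g_{k,c}(a) = [q^{⌊ak/2⌋ - c}] (a+k choose k)_q`, where the Gaussian binomial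
coefficient is characterized by `G a · ∏_{i=1}^k (1-q^i) = ∏_{i=1}^k (1-q^{a+i})`.
Then `a ↦ g_{k,c}(a)` is a quasipolynomial in `a`: there are a period `N ≥ 1` and
polynomials `p_0, …, p_{N-1}` (with rational coefficients) such that
`g_{k,c}(a) = p_{a mod N}(a)` for all sufficiently large `a`. -/
theorem gauss_middle_coeff_quasipolynomial (k : ℕ) (hk : 1 ≤ k) (c : ℕ)
    (G : ℕ → Polynomial ℤ)
    (hG : ∀ a, G a * ∏ i ∈ Finset.range k, (1 - Polynomial.X ^ (i + 1)) =
      ∏ i ∈ Finset.range k, (1 - Polynomial.X ^ (a + i + 1))) :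
    ∃ (N : ℕ) (_ : 1 ≤ N) (p : ℕ → Polynomial ℚ) (A : ℕ), ∀ a ≥ A,
      (zcoeffZ (G a) ((a * k / 2 : ℕ) - (c : ℤ)) : ℚ) = (p (a % N)).eval (a : ℚ) := by
  classical
  set F : Finset ℕ → ℕ → ℚ := fun S a => (-1:ℚ)^S.card *
    GMCaux.pe k (((a * k / 2 - c : ℕ) : ℤ) - ((S.card * a + ∑ i ∈ S, (i+1) : ℕ) : ℤ)) with hF
  have hEQP : ∀ S ∈ (Finset.range k).powerset, GMCaux.IsEQP (F S) := by
    intro S hS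
    by_cases hcase : 2 * S.card < k
    · exact GMCaux.term_eqp k c S.card (∑ i ∈ S, (i+1)) hcase
    · apply GMCaux.eqp_of_eventually_zero _ 0
      intro a _
      have hs1 : 1 ≤ S.card := by
        by_contra h
        push_neg at h
        omega
      have ht1 : 1 ≤ ∑ i ∈ S, (i+1) := by
        have hne : S.Nonempty := Finset.card_pos.mp hs1
        calc 1 ≤ S.card := hs1
          _ = ∑ _i ∈ S, 1 := by rw [Finset.sum_const, smul_eq_mul, mul_one]
          _ ≤ ∑ i ∈ S, (i+1) := Finset.sum_le_sum (fun i _ => by omega)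
      have hdk : a * k ≤ 2 * (S.card * a) := by
        calc a * k ≤ a * (2 * S.card) := Nat.mul_le_mul_left a (by omega)
          _ = 2 * (S.card * a) := by ring
      have h1 : a * k / 2 - c ≤ S.card * a := by omega
      have harg : ((a * k / 2 - c : ℕ) : ℤ) - ((S.card * a + ∑ i ∈ S, (i+1) : ℕ) : ℤ) < 0 := by
        omega
      simp only [hF]
      rw [GMCaux.pe_neg k _ harg, mul_zero]
  obtain ⟨N, hN1, p, A, hA⟩ := GMCaux.eqp_sum ((Finset.range k).powerset) F hEQP
  refine ⟨N, hN1, p, max A (2*c + 2), ?_⟩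
  intro a ha
  have hak : a ≤ a * k := Nat.le_mul_of_pos_right a (by omega)
  have hdiv : a / 2 ≤ a * k / 2 := Nat.div_le_div_right hak
  have ha2 : 2*c + 2 ≤ a := le_trans (le_max_right _ _) ha
  have hca : c ≤ a * k / 2 := by omega
  have hzc : ((a * k / 2 : ℕ) : ℤ) - (c:ℤ) = ((a * k / 2 - c : ℕ) : ℤ) := by omega
  rw [zcoeffZ, if_pos (by omega : (0:ℤ) ≤ ((a * k / 2 : ℕ) : ℤ) - (c:ℤ))]
  have htn : (((a * k / 2 : ℕ) : ℤ) - (c:ℤ)).toNat = a * k / 2 - c := by omega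
  rw [htn]
  rw [GMCaux.coeff_eq_sum k G hG a (a * k / 2 - c)]
  have := hA a (le_trans (le_max_left _ _) ha)
  simp only [hF] at this
  exact this
end

section
/- For positive integers j < k and v \geq 1, v^{k-1} A(k-1, j) = [x^{vj}] (1 + x + \cdots + x^{v-1})^k A_{k-1}(x), where A(k-1,j) is the Eulerian number counting permutations of {1,...,k-1} with j-1 descents and A_{k-1}(x) = \sum_j A(k-1,j) x^j is the Eulerian polynomial. -/
open scoped Classical

/-- The number of descents of a permutation `w` of `{0, …, d-1}`. -/
noncomputable def descents {d : ℕ} (w : Equiv.Perm (Fin d)) : ℕ :=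
  (Finset.univ.filter (fun i : Fin d =>
    ∃ h : (i : ℕ) + 1 < d, w ⟨(i : ℕ) + 1, h⟩ < w i)).card

/-- The Eulerian polynomial `A_d(x) = ∑_{w ∈ S_d} x^{1 + des(w)} = ∑_i A(d,i) x^i`. -/
noncomputable def eulerianPoly (d : ℕ) : Polynomial ℚ :=
  ∑ w : Equiv.Perm (Fin d), Polynomial.X ^ (descents w + 1)

/-- The Eulerian number `A(d,i)`: the number of permutations of a `d`-element set with
exactly `i-1` descents. -/
noncomputable def eulerianNumber (d i : ℕ) : ℕ :=
  (Finset.univ.filter (fun w : Equiv.Perm (Fin d) => descents w = i - 1)).card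

lemma chain_rel {d : ℕ} (R : Fin d → Fin d → Prop)
    (ht : ∀ a b c, R a b → R b c → R a c)
    (ha : ∀ (i : Fin d) (h : (i : ℕ) + 1 < d), R i ⟨(i : ℕ) + 1, h⟩) :
    ∀ i j : Fin d, i < j → R i j := by
  have key : ∀ m : ℕ, ∀ i j : Fin d, (j : ℕ) = (i : ℕ) + (m + 1) → R i j := by
    intro m
    induction m with
    | zero =>
      intro i j hj
      have h : (i : ℕ) + 1 < d := by have := j.isLt; omega
      have : j = ⟨(i : ℕ) + 1, h⟩ := Fin.ext (by simp [hj])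
      exact this ▸ ha i h
    | succ m ih =>
      intro i j hj
      have h : (i : ℕ) + 1 < d := by have := j.isLt; omega
      exact ht _ _ _ (ha i h) (ih ⟨(i : ℕ) + 1, h⟩ j (by simp [hj]; omega))
  intro i j hij
  have hij' : (i : ℕ) < (j : ℕ) := hij
  exact key ((j : ℕ) - (i : ℕ) - 1) i j (by omega)

lemma card_strictMono (a b : ℕ) :
    Fintype.card {f : Fin a → Fin b // StrictMono f} = b.choose a := by
  have e : {f : Fin a → Fin b // StrictMono f} ≃ {s : Finset (Fin b) // s.card = a} := by
    refine ⟨fun f => ⟨Finset.univ.image f.1, ?_⟩,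
      fun s => ⟨s.1.orderEmbOfFin s.2, (s.1.orderEmbOfFin s.2).strictMono⟩, ?_, ?_⟩
    · rw [Finset.card_image_of_injective _ f.2.injective, Finset.card_univ, Fintype.card_fin]
    · intro f
      apply Subtype.ext
      exact (Finset.orderEmbOfFin_unique _ (fun x => Finset.mem_image_of_mem _ (Finset.mem_univ x)) f.2).symm
    · intro s
      apply Subtype.ext
      apply Finset.eq_of_subset_of_card_le
      · intro x hx
        simp only [Finset.mem_image] at hx
        obtain ⟨i, _, rfl⟩ := hx
        exact Finset.orderEmbOfFin_mem s.1 s.2 i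
      · rw [Finset.card_image_of_injective _ (s.1.orderEmbOfFin s.2).strictMono.injective,
          Finset.card_univ, Fintype.card_fin, s.2]
  rw [Fintype.card_congr e, Fintype.card_finset_len, Fintype.card_fin]

lemma card_constrained (d n : ℕ) (D : Finset (Fin d)) (hD : ∀ i ∈ D, (i : ℕ) + 1 < d) :
    Fintype.card {g : Fin d → Fin n //
      ∀ (i : Fin d) (h : (i : ℕ) + 1 < d),
        g i ≤ g ⟨(i : ℕ) + 1, h⟩ ∧ (i ∈ D → g i < g ⟨(i : ℕ) + 1, h⟩)} =
    Fintype.card {f : Fin d → Fin (n + (d - 1 - D.card)) // StrictMono f} := by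
  set s := D.card with hs
  set m := n + (d - 1 - s) with hm
  set c : Fin d → ℕ := fun i => (D.filter (fun j => j < i)).card with hc
  have hc_le : ∀ i : Fin d, c i ≤ (i : ℕ) := by
    intro i
    calc c i ≤ (Finset.Iio i).card := Finset.card_le_card (by
      intro j hj; simp only [hc, Finset.mem_filter] at hj; exact Finset.mem_Iio.2 hj.2)
    _ = (i : ℕ) := Fin.card_Iio i
  have hc_le_s : ∀ i : Fin d, c i ≤ s := fun i => Finset.card_filter_le _ _
  have hd_pos : ∀ _ : Fin d, 0 < d := fun i => i.pos
  have hsplit : ∀ i : Fin d, s + (i : ℕ) ≤ (d - 1) + c i := by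
    intro i
    have hpos := i.pos
    have hpart := Finset.card_filter_add_card_filter_not (s := D) (fun j => j < i)
    have ht : (D.filter (fun j => ¬ j < i)).card ≤ (d - 1) - (i : ℕ) := by
      calc (D.filter (fun j => ¬ j < i)).card
          ≤ (Finset.Ico i (⟨d - 1, by omega⟩ : Fin d)).card := Finset.card_le_card (by
            intro j hj
            simp only [Finset.mem_filter, not_lt] at hj
            have hjd := hD j hj.1
            exact Finset.mem_Ico.2 ⟨hj.2, by rw [Fin.lt_def]; simpa using by omega⟩)
        _ = (d - 1) - (i : ℕ) := by rw [Fin.card_Ico]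
    have hpart' : c i + (D.filter (fun j => ¬ j < i)).card = s := hpart
    omega
  have hcsucc : ∀ (i : Fin d) (h : (i : ℕ) + 1 < d),
      c ⟨(i : ℕ) + 1, h⟩ = c i + (if i ∈ D then 1 else 0) := by
    intro i h
    have : (D.filter (fun j => j < (⟨(i : ℕ) + 1, h⟩ : Fin d)))
        = D.filter (fun j => j < i ∨ j = i) := by
      apply Finset.filter_congr
      intro j _
      constructor
      · intro hj
        have : (j : ℕ) < (i : ℕ) + 1 := hj
        rcases Nat.lt_or_ge (j : ℕ) (i : ℕ) with h' | h'
        · exact Or.inl h'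
        · exact Or.inr (Fin.ext (by omega))
      · intro hj
        rcases hj with h' | h'
        · exact lt_trans h' (by rw [Fin.lt_def]; simp)
        · subst h'; rw [Fin.lt_def]; simp
    rw [hc]
    simp only [this]
    rw [Finset.filter_or, Finset.card_union_of_disjoint (by
      simp only [Finset.disjoint_left, Finset.mem_filter]
      rintro a ⟨_, ha⟩ ⟨_, rfl⟩
      exact lt_irrefl _ ha), Finset.filter_eq']
    split <;> simp
  -- step lemmas for strictly monotone maps into Fin m
  have hstep : ∀ (h : Fin d → Fin m), StrictMono h → ∀ i j : Fin d, i < j →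
      (h i : ℕ) + ((j : ℕ) - (i : ℕ)) ≤ (h j : ℕ) := by
    intro h hsm
    have key := chain_rel (fun i j : Fin d =>
        (i : ℕ) < (j : ℕ) ∧ (h i : ℕ) + ((j : ℕ) - (i : ℕ)) ≤ (h j : ℕ))
      (by rintro a b c ⟨h1, h2⟩ ⟨h3, h4⟩; exact ⟨by omega, by omega⟩)
      (by
        intro i hlt
        have hh : h i < h ⟨(i : ℕ) + 1, hlt⟩ := hsm (by rw [Fin.lt_def]; simp)
        have hh' : (h i : ℕ) < (h ⟨(i : ℕ) + 1, hlt⟩ : ℕ) := hh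
        exact ⟨by simp, by simp; omega⟩)
    exact fun i j hij => (key i j hij).2
  have hge : ∀ (h : Fin d → Fin m), StrictMono h → ∀ i : Fin d, (i : ℕ) ≤ (h i : ℕ) := by
    intro h hsm i
    rcases Nat.eq_zero_or_pos (i : ℕ) with h0 | h0
    · omega
    · have hst := hstep h hsm ⟨0, i.pos⟩ i (by rw [Fin.lt_def]; simpa using h0)
      simp only [Fin.val_mk] at hst
      omega
  have hub : ∀ (h : Fin d → Fin m), StrictMono h → ∀ i : Fin d,
      (h i : ℕ) + ((d - 1) - (i : ℕ)) < m := by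
    intro h hsm i
    have hpos := i.pos
    by_cases hi : (i : ℕ) = d - 1
    · have := (h i).isLt; omega
    · have hlt : i < (⟨d - 1, by omega⟩ : Fin d) := by
        rw [Fin.lt_def]; exact (by have := i.isLt; simp; omega)
      have h1 := hstep h hsm i ⟨d - 1, by omega⟩ hlt
      have h2 := (h ⟨d - 1, by omega⟩).isLt
      simp at h1
      omega
  apply Fintype.card_congr
  exact {
    toFun := fun g => ⟨fun i => ⟨(g.1 i : ℕ) + ((i : ℕ) - c i), by
      have h1 := hsplit i
      have h2 := hc_le i
      have h3 := hc_le_s i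
      have h4 := (g.1 i).isLt
      omega⟩, by
      have adj : ∀ (i : Fin d) (hlt : (i : ℕ) + 1 < d),
          (g.1 i : ℕ) + ((i : ℕ) - c i) <
            (g.1 ⟨(i : ℕ) + 1, hlt⟩ : ℕ) + (((i : ℕ) + 1) - c ⟨(i : ℕ) + 1, hlt⟩) := by
        intro i hlt
        obtain ⟨hle, hstrict⟩ := g.2 i hlt
        have hle' : (g.1 i : ℕ) ≤ (g.1 ⟨(i : ℕ) + 1, hlt⟩ : ℕ) := hle
        have hcs := hcsucc i hlt
        have h2 := hc_le i
        by_cases hiD : i ∈ D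
        · have := hstrict hiD
          have h3 : (g.1 i : ℕ) < (g.1 ⟨(i : ℕ) + 1, hlt⟩ : ℕ) := this
          simp [hiD] at hcs
          omega
        · simp [hiD] at hcs
          omega
      intro a b hab
      have key := chain_rel (fun a b : Fin d =>
          (g.1 a : ℕ) + ((a : ℕ) - c a) < (g.1 b : ℕ) + ((b : ℕ) - c b))
        (fun _ _ _ h1 h2 => Nat.lt_trans h1 h2) adj a b hab
      exact key⟩
    invFun := fun h => ⟨fun i => ⟨(h.1 i : ℕ) - ((i : ℕ) - c i), by
      have h1 := hub h.1 h.2 i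
      have h0 := hge h.1 h.2 i
      have h2 := hc_le i
      have h3 := hc_le_s i
      have h4 := hsplit i
      have h5 := i.pos
      have h6 := i.isLt
      omega⟩, by
      intro i hlt
      have hh : h.1 i < h.1 ⟨(i : ℕ) + 1, hlt⟩ := h.2 (by rw [Fin.lt_def]; simp)
      have hh' : (h.1 i : ℕ) < (h.1 ⟨(i : ℕ) + 1, hlt⟩ : ℕ) := hh
      have hg1 := hge h.1 h.2 i
      have hg2 := hge h.1 h.2 ⟨(i : ℕ) + 1, hlt⟩
      have hg2' : (i : ℕ) + 1 ≤ (h.1 ⟨(i : ℕ) + 1, hlt⟩ : ℕ) := by simpa using hg2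
      have hcs := hcsucc i hlt
      have h2 := hc_le i
      constructor
      · rw [Fin.le_def]
        simp only []
        by_cases hiD : i ∈ D <;> simp [hiD] at hcs <;> omega
      · intro hiD
        rw [Fin.lt_def]
        simp only []
        simp [hiD] at hcs
        omega⟩
    left_inv := by
      intro g
      apply Subtype.ext
      funext i
      apply Fin.ext
      simp only []
      have h2 := hc_le i
      omega
    right_inv := by
      intro h
      apply Subtype.ext
      funext i
      apply Fin.ext
      simp only []
      have hg1 := hge h.1 h.2 i
      have h2 := hc_le i
      omega
  }


lemma fiber_card (d n : ℕ) (w : Equiv.Perm (Fin d)) :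
    Fintype.card {f : Fin d → Fin n // Tuple.sort f = w} =
      (n + (d - 1 - descents w)).choose d := by
  set D : Finset (Fin d) := Finset.univ.filter (fun i : Fin d =>
    ∃ h : (i : ℕ) + 1 < d, w ⟨(i : ℕ) + 1, h⟩ < w i) with hDdef
  have hD : ∀ i ∈ D, (i : ℕ) + 1 < d := by
    intro i hi
    simp only [hDdef, Finset.mem_filter] at hi
    obtain ⟨-, h, -⟩ := hi
    exact h
  have hmemD : ∀ (i : Fin d) (h : (i : ℕ) + 1 < d), i ∈ D ↔ w ⟨(i : ℕ) + 1, h⟩ < w i := by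
    intro i h
    simp only [hDdef, Finset.mem_filter, Finset.mem_univ, true_and]
    exact ⟨fun ⟨h', hlt⟩ => hlt, fun hlt => ⟨h, hlt⟩⟩
  have hdesc : descents w = D.card := rfl
  have e : {f : Fin d → Fin n // Tuple.sort f = w} ≃
      {g : Fin d → Fin n // ∀ (i : Fin d) (h : (i : ℕ) + 1 < d),
        g i ≤ g ⟨(i : ℕ) + 1, h⟩ ∧ (i ∈ D → g i < g ⟨(i : ℕ) + 1, h⟩)} := by
    refine ⟨fun f => ⟨f.1 ∘ w, ?_⟩, fun g => ⟨g.1 ∘ w.symm, ?_⟩, ?_, ?_⟩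
    · obtain ⟨hmono, hstab⟩ := Tuple.eq_sort_iff.1 f.2.symm
      intro i h
      have hle : i ≤ (⟨(i : ℕ) + 1, h⟩ : Fin d) := by rw [Fin.le_def]; simp
      have hlt : i < (⟨(i : ℕ) + 1, h⟩ : Fin d) := by rw [Fin.lt_def]; simp
      refine ⟨hmono hle, fun hiD => ?_⟩
      rcases (hmono hle).lt_or_eq with h' | h'
      · exact h'
      · exact absurd (hstab i _ hlt h') (lt_asymm ((hmemD i h).1 hiD))
    · rw [show (Tuple.sort (g.1 ∘ w.symm) = w) ↔ (w = Tuple.sort (g.1 ∘ ⇑w.symm)) from eq_comm,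
        Tuple.eq_sort_iff]
      have hcomp : (g.1 ∘ ⇑w.symm) ∘ ⇑w = g.1 := by
        funext x; simp
      have hkey := chain_rel (fun i j : Fin d =>
          g.1 i ≤ g.1 j ∧ (g.1 i = g.1 j → w i < w j))
        (by
          rintro a b c ⟨h1, h2⟩ ⟨h3, h4⟩
          refine ⟨le_trans h1 h3, fun heq => ?_⟩
          have e1 : g.1 a = g.1 b := le_antisymm h1 (heq ▸ h3)
          exact lt_trans (h2 e1) (h4 (e1 ▸ heq)))
        (by
          intro i h
          refine ⟨(g.2 i h).1, fun heq => ?_⟩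
          by_contra hno
          have hne : w i ≠ w ⟨(i : ℕ) + 1, h⟩ := by
            intro hc
            have := w.injective hc
            exact absurd (congrArg Fin.val this) (by simp)
          have : w ⟨(i : ℕ) + 1, h⟩ < w i := lt_of_le_of_ne (not_lt.1 hno) (Ne.symm hne)
          exact absurd heq (ne_of_lt ((g.2 i h).2 ((hmemD i h).2 this))))
      constructor
      · rw [hcomp]
        intro a b hab
        rcases hab.lt_or_eq with h' | h'
        · exact (hkey a b h').1
        · exact h' ▸ le_refl _
      · intro i j hij heq
        rw [show ((g.1 ∘ ⇑w.symm) (w i)) = g.1 i by simp,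
          show ((g.1 ∘ ⇑w.symm) (w j)) = g.1 j by simp] at heq
        exact (hkey i j hij).2 heq
    · intro f
      apply Subtype.ext
      funext x; simp
    · intro g
      apply Subtype.ext
      funext x; simp
  rw [Fintype.card_congr e, card_constrained d n D hD, card_strictMono, hdesc]

lemma worpitzky (d n : ℕ) :
    ∑ w : Equiv.Perm (Fin d), (n + (d - 1 - descents w)).choose d = n ^ d := by
  have h1 : Fintype.card (Fin d → Fin n) = n ^ d := by
    rw [Fintype.card_fun, Fintype.card_fin, Fintype.card_fin]
  rw [← h1, ← Finset.card_univ,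
    Finset.card_eq_sum_card_fiberwise (f := fun f => Tuple.sort f)
      (t := Finset.univ) (fun f _ => Finset.mem_univ _)]
  apply Finset.sum_congr rfl
  intro w _
  rw [← fiber_card d n w, Fintype.card_subtype]


lemma descents_le {d : ℕ} (w : Equiv.Perm (Fin d)) : descents w ≤ d - 1 := by
  rcases d with - | m
  · simp [descents]
  · calc descents w ≤ (Finset.univ.erase (⟨m, lt_add_one m⟩ : Fin (m + 1))).card := by
          apply Finset.card_le_card
          intro i hi
          simp only [Finset.mem_filter] at hi
          obtain ⟨hu, h, -⟩ := hi
          refine Finset.mem_erase.2 ⟨?_, hu⟩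
          intro hc
          rw [hc] at h
          simp at h
    _ = m := by
          rw [Finset.card_erase_of_mem (Finset.mem_univ _), Finset.card_univ,
            Fintype.card_fin]
          omega
    _ = m + 1 - 1 := by omega

open PowerSeries in
lemma eulerianPoly_mul_inv (d : ℕ) (hd : 1 ≤ d) :
    ((eulerianPoly d : Polynomial ℚ) : ℚ⟦X⟧) * (invOneSubPow ℚ (d + 1)).val =
      PowerSeries.mk (fun n => (n : ℚ) ^ d) := by
  ext n
  rw [PowerSeries.coeff_mk, invOneSubPow_val_succ_eq_mk_add_choose]
  have hcast : ((eulerianPoly d : Polynomial ℚ) : ℚ⟦X⟧)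
      = ∑ w : Equiv.Perm (Fin d), (PowerSeries.X : ℚ⟦X⟧) ^ (descents w + 1) := by
    rw [eulerianPoly]
    rw [← Polynomial.coeToPowerSeries.ringHom_apply, map_sum]
    simp only [map_pow, Polynomial.coeToPowerSeries.ringHom_apply, Polynomial.coe_X]
  rw [hcast, Finset.sum_mul, map_sum]
  have hterm : ∀ w : Equiv.Perm (Fin d),
      (PowerSeries.coeff n) ((PowerSeries.X : ℚ⟦X⟧) ^ (descents w + 1) *
        PowerSeries.mk (fun n => (Nat.choose (d + n) d : ℚ))) =
      (Nat.choose (n + (d - 1 - descents w)) d : ℚ) := by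
    intro w
    rw [PowerSeries.coeff_X_pow_mul']
    have hle := descents_le w
    split
    · rw [PowerSeries.coeff_mk]
      congr 2
      omega
    · rw [eq_comm, Nat.cast_eq_zero, Nat.choose_eq_zero_iff]
      omega
  rw [Finset.sum_congr rfl (fun w _ => hterm w)]
  rw [← Nat.cast_sum, worpitzky d n]
  push_cast
  ring

open PowerSeries in
lemma eulerianPoly_eq (d : ℕ) (hd : 1 ≤ d) :
    ((eulerianPoly d : Polynomial ℚ) : ℚ⟦X⟧) =
      (1 - PowerSeries.X : ℚ⟦X⟧) ^ (d + 1) * PowerSeries.mk (fun n => (n : ℚ) ^ d) := by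
  rw [← eulerianPoly_mul_inv d hd]
  rw [show ((1 - PowerSeries.X : ℚ⟦X⟧) ^ (d + 1)) = (invOneSubPow ℚ (d + 1)).inv from
    (invOneSubPow_inv_eq_one_sub_pow ℚ (d + 1)).symm]
  rw [mul_comm ((eulerianPoly d : Polynomial ℚ) : ℚ⟦X⟧), ← mul_assoc,
    (invOneSubPow ℚ (d + 1)).inv_val, one_mul]

lemma eulerianPoly_coeff (d jj : ℕ) (hj : 1 ≤ jj) :
    (eulerianPoly d).coeff jj = (eulerianNumber d jj : ℚ) := by
  rw [eulerianPoly, Polynomial.finset_sum_coeff, eulerianNumber]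
  have : ∀ w : Equiv.Perm (Fin d),
      (Polynomial.X ^ (descents w + 1) : Polynomial ℚ).coeff jj =
        if descents w = jj - 1 then 1 else 0 := by
    intro w
    rw [Polynomial.coeff_X_pow]
    congr 1
    simp only [eq_iff_iff]
    omega
  rw [Finset.sum_congr rfl (fun w _ => this w), Finset.sum_boole]

open PowerSeries in
lemma coeff_one_sub_pow_mul (d k u N : ℕ) :
    (PowerSeries.coeff N) ((1 - (PowerSeries.X : ℚ⟦X⟧) ^ u) ^ k *
        PowerSeries.mk (fun n => (n : ℚ) ^ d)) =
      ∑ m ∈ Finset.range (k + 1), (-1 : ℚ) ^ m * (k.choose m) *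
        (if u * m ≤ N then ((N - u * m : ℕ) : ℚ) ^ d else 0) := by
  rw [show ((1 : ℚ⟦X⟧) - X ^ u) = (-X ^ u) + 1 by ring, add_pow, Finset.sum_mul, map_sum]
  apply Finset.sum_congr rfl
  intro m _
  have h1 : ((-X ^ u : ℚ⟦X⟧) ^ m * 1 ^ (k - m) * (k.choose m : ℚ⟦X⟧)) =
      PowerSeries.C ((-1 : ℚ) ^ m * (k.choose m : ℚ)) * X ^ (u * m) := by
    rw [neg_pow, one_pow, pow_mul, map_mul, map_pow, map_neg, map_one, map_natCast]
    ring
  rw [h1, mul_assoc, PowerSeries.coeff_C_mul, PowerSeries.coeff_X_pow_mul']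
  split
  · rw [PowerSeries.coeff_mk]
  · ring

/-- For positive integers `j < k` and `v ≥ 1`,
`v^{k-1} A(k-1, j) = [x^{vj}] (1 + x + ⋯ + x^{v-1})^k A_{k-1}(x)`. -/
theorem eulerianNumber_coeff_identity (v j k : ℕ) (hv : 1 ≤ v) (hj : 1 ≤ j)
    (hjk : j < k) :
    (v : ℚ) ^ (k - 1) * (eulerianNumber (k - 1) j : ℚ) =
      (((∑ i ∈ Finset.range v, Polynomial.X ^ i) ^ k *
        eulerianPoly (k - 1)).coeff (v * j)) := by
  set d := k - 1 with hdd
  have hk : k = d + 1 := by omega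
  have hd1 : 1 ≤ d := by omega
  -- the polynomial geometric identity
  have hpoly : ((∑ i ∈ Finset.range v, Polynomial.X ^ i) * (1 - Polynomial.X) :
      Polynomial ℚ) = 1 - Polynomial.X ^ v := by
    have h := geom_sum_mul (Polynomial.X : Polynomial ℚ) v
    linear_combination -h
  -- cast the RHS polynomial to power series
  have hQ : (((∑ i ∈ Finset.range v, Polynomial.X ^ i) ^ k * eulerianPoly d :
        Polynomial ℚ) : PowerSeries ℚ) =
      (1 - (PowerSeries.X : PowerSeries ℚ) ^ v) ^ k *
        PowerSeries.mk (fun n => (n : ℚ) ^ d) := by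
    rw [Polynomial.coe_mul, Polynomial.coe_pow, eulerianPoly_eq d hd1, ← hk]
    rw [← mul_assoc, ← mul_pow]
    congr 2
    rw [← Polynomial.coe_one (R := ℚ), ← Polynomial.coe_X (R := ℚ)]
    rw [← Polynomial.coe_sub, ← Polynomial.coe_mul, hpoly]
    push_cast [Polynomial.coe_sub, Polynomial.coe_pow, Polynomial.coe_one, Polynomial.coe_X]
    ring
  rw [← Polynomial.coeff_coe, hQ, coeff_one_sub_pow_mul]
  -- now the LHS
  have hA : (eulerianNumber d j : ℚ) =
      ∑ m ∈ Finset.range (k + 1), (-1 : ℚ) ^ m * (k.choose m) *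
        (if 1 * m ≤ j then ((j - 1 * m : ℕ) : ℚ) ^ d else 0) := by
    rw [← eulerianPoly_coeff d j hj, ← Polynomial.coeff_coe, eulerianPoly_eq d hd1, ← hk,
      ← pow_one (PowerSeries.X : PowerSeries ℚ), coeff_one_sub_pow_mul]
  rw [hA, Finset.mul_sum]
  apply Finset.sum_congr rfl
  intro m _
  have hiff : 1 * m ≤ j ↔ v * m ≤ v * j := by
    constructor
    · intro h; exact Nat.mul_le_mul_left v (by omega)
    · intro h
      have := Nat.le_of_mul_le_mul_left h (by omega)
      omega
  by_cases hm : 1 * m ≤ j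
  · have hm' : m ≤ j := by omega
    rw [if_pos hm, if_pos (hiff.1 hm)]
    have h2 : ((v * j - v * m : ℕ) : ℚ) = (v : ℚ) * ((j : ℚ) - (m : ℚ)) := by
      rw [← Nat.mul_sub, Nat.cast_mul, Nat.cast_sub hm']
    have h3 : ((j - 1 * m : ℕ) : ℚ) = (j : ℚ) - (m : ℚ) := by
      rw [one_mul, Nat.cast_sub hm']
    rw [h2, h3, mul_pow]
    ring
  · rw [if_neg hm, if_neg (fun hc => hm (hiff.2 hc))]
    ring
end

section
/- For a \to \infty and every nonnegative integer c, ([q^{2a-c}] - [q^{2a-c-1}])\binom{a+4}{4}_q = (1/24)(2c + 1 + 3\cdot(-1)^c) a + O(1). -/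
def d4 : ℕ → ℤ
  | 0 => 1 | 1 => 0 | 2 => 1 | 3 => 1 | 4 => 2 | 5 => 1 | 6 => 3 | 7 => 2 | 8 => 4
  | n+9 => d4 (n+7) + d4 (n+6) + d4 (n+5) - d4 (n+4) - d4 (n+3) - d4 (n+2) + d4 n

def Qp (n : ℕ) : ℤ := (n:ℤ)^2 + 9*(n:ℤ) + 3*(-1)^n*(n:ℤ)

def ee (n : ℕ) : ℤ := 48 * d4 n - Qp n

lemma hQd (n : ℕ) : 48 * d4 n = ee n + Qp n := by simp [ee]

lemma Qper (n : ℕ) : Qp (n+12) = Qp n + 24*(n:ℤ) + 252 + 36*(-1)^n := by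
  rcases Nat.even_or_odd n with h | h
  · obtain ⟨k, rfl⟩ := h
    simp only [Qp, pow_add, pow_mul]
    push_cast
    norm_num
    ring
  · obtain ⟨k, rfl⟩ := h
    simp only [Qp, pow_add, pow_mul]
    push_cast
    norm_num
    ring

lemma eper : ∀ n, ee (n + 12) = ee n := by
  intro n
  induction n using Nat.strong_induction_on with
  | _ n IH =>
    rcases (by omega : n ≤ 8 ∨ 9 ≤ n) with h | h
    · interval_cases n <;> norm_num [ee, Qp, d4]
    · obtain ⟨m, rfl⟩ : ∃ m, n = m + 9 := ⟨n - 9, by omega⟩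
      have r21 : d4 (m+21) = d4 (m+19) + d4 (m+18) + d4 (m+17) - d4 (m+16) - d4 (m+15) - d4 (m+14) + d4 (m+12) := by
        rw [show m+21 = (m+12)+9 by omega]; rfl
      have r9 : d4 (m+9) = d4 (m+7) + d4 (m+6) + d4 (m+5) - d4 (m+4) - d4 (m+3) - d4 (m+2) + d4 m := rfl
      have I0 := IH m (by omega)
      have I2 := IH (m+2) (by omega)
      have I3 := IH (m+3) (by omega)
      have I4 := IH (m+4) (by omega)
      have I5 := IH (m+5) (by omega)
      have I6 := IH (m+6) (by omega)
      have I7 := IH (m+7) (by omega)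
      have e2 : (-1:ℤ)^(m+2) = (-1)^m := by rw [pow_add]; norm_num
      have e3 : (-1:ℤ)^(m+3) = -(-1)^m := by rw [pow_add]; norm_num
      have e4 : (-1:ℤ)^(m+4) = (-1)^m := by rw [pow_add]; norm_num
      have e5 : (-1:ℤ)^(m+5) = -(-1)^m := by rw [pow_add]; norm_num
      have e6 : (-1:ℤ)^(m+6) = (-1)^m := by rw [pow_add]; norm_num
      have e7 : (-1:ℤ)^(m+7) = -(-1)^m := by rw [pow_add]; norm_num
      have e9 : (-1:ℤ)^(m+9) = -(-1)^m := by rw [pow_add]; norm_num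
      have q0 := Qper m
      have q2 := Qper (m+2)
      have q3 := Qper (m+3)
      have q4 := Qper (m+4)
      have q5 := Qper (m+5)
      have q6 := Qper (m+6)
      have q7 := Qper (m+7)
      have q9 := Qper (m+9)
      have hh : (m+9)+12 = m+21 := by omega
      have hh2 : (m+2)+12 = m+14 := by omega
      have hh3 : (m+3)+12 = m+15 := by omega
      have hh4 : (m+4)+12 = m+16 := by omega
      have hh5 : (m+5)+12 = m+17 := by omega
      have hh6 : (m+6)+12 = m+18 := by omega
      have hh7 : (m+7)+12 = m+19 := by omega
      have hh0 : m+12 = m+12 := rfl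
      rw [hh]
      rw [hh2] at I2 q2; rw [hh3] at I3 q3; rw [hh4] at I4 q4
      rw [hh5] at I5 q5; rw [hh6] at I6 q6; rw [hh7] at I7 q7
      rw [hh] at q9
      have h21 := hQd (m+21); have h19 := hQd (m+19); have h18 := hQd (m+18)
      have h17 := hQd (m+17); have h16 := hQd (m+16); have h15 := hQd (m+15)
      have h14 := hQd (m+14); have h12 := hQd (m+12)
      have g9 := hQd (m+9); have g7 := hQd (m+7); have g6 := hQd (m+6)
      have g5 := hQd (m+5); have g4 := hQd (m+4); have g3 := hQd (m+3)
      have g2 := hQd (m+2); have g0 := hQd m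
      rw [e3] at q3; rw [e4] at q4; rw [e5] at q5; rw [e6] at q6; rw [e7] at q7; rw [e9] at q9
      push_cast at q0 q2 q3 q4 q5 q6 q7 q9
      linarith

lemma ee_bound : ∀ n, |ee n| ≤ 48 := by
  intro n
  induction n using Nat.strong_induction_on with
  | _ n IH =>
    rcases (by omega : n < 12 ∨ 12 ≤ n) with h | h
    · interval_cases n <;> norm_num [ee, Qp, d4]
    · obtain ⟨m, rfl⟩ : ∃ m, n = m + 12 := ⟨n - 12, by omega⟩
      rw [eper m]
      exact IH m (by omega)

lemma negpow (n : ℕ) : (-1:ℤ)^n = if n % 2 = 0 then 1 else -1 := by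
  rcases Nat.even_or_odd n with ⟨k, rfl⟩ | ⟨k, rfl⟩
  · rw [if_pos (by omega), ← two_mul, pow_mul]; norm_num
  · rw [if_neg (by omega), pow_add, pow_mul]; norm_num

set_option maxHeartbeats 1000000 in
lemma key (c b : ℕ) :
    |48 * (d4 (c+2*b+10) - d4 (b+4) - d4 (b+3) - d4 (b+2) - d4 (b+1)) -
      2*(2*(c:ℤ)+1+3*(-1)^c)*((c:ℤ)+(b:ℤ)+5)| ≤ 306 + 3*(c:ℤ)^2 + 10*(c:ℤ) := by
  have B0 := ee_bound (c+2*b+10)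
  have B1 := ee_bound (b+4)
  have B2 := ee_bound (b+3)
  have B3 := ee_bound (b+2)
  have B4 := ee_bound (b+1)
  rcases Nat.even_or_odd c with hc | hc <;> rcases Nat.even_or_odd b with hb | hb <;>
    simp only [Nat.even_iff, Nat.odd_iff] at hc hb
  · have st : (-1:ℤ)^c = 1 := by rw [negpow, show c % 2 = 0 from by omega]; norm_num
    have su : (-1:ℤ)^b = 1 := by rw [negpow, show b % 2 = 0 from by omega]; norm_num
    have s0 : (-1:ℤ)^(c+2*b+10) = 1 := by rw [negpow, show (c+2*b+10) % 2 = 0 from by omega]; norm_num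
    have s4 : (-1:ℤ)^(b+4) = 1 := by rw [negpow, show (b+4) % 2 = 0 from by omega]; norm_num
    have s3 : (-1:ℤ)^(b+3) = (-1) := by rw [negpow, show (b+3) % 2 = 1 from by omega]; norm_num
    have s2 : (-1:ℤ)^(b+2) = 1 := by rw [negpow, show (b+2) % 2 = 0 from by omega]; norm_num
    have s1 : (-1:ℤ)^(b+1) = (-1) := by rw [negpow, show (b+1) % 2 = 1 from by omega]; norm_num
    have hX : (48 * (d4 (c+2*b+10) - d4 (b+4) - d4 (b+3) - d4 (b+2) - d4 (b+1)) -
        2*(2*(c:ℤ)+1+3*(-1:ℤ)^c)*((c:ℤ)+(b:ℤ)+5)) =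
        ee (c+2*b+10) - ee (b+4) - ee (b+3) - ee (b+2) - ee (b+1) +
        (-3*(c:ℤ)^2 + 7*(c:ℤ) - 3*1*(c:ℤ) + 60 - 6*1) := by
      simp only [ee, Qp, s0, s4, s3, s2, s1, st, su]
      push_cast
      ring
    rw [hX, abs_le] at *
    constructor <;> nlinarith [sq_nonneg ((c:ℤ))]
  · have st : (-1:ℤ)^c = 1 := by rw [negpow, show c % 2 = 0 from by omega]; norm_num
    have su : (-1:ℤ)^b = (-1) := by rw [negpow, show b % 2 = 1 from by omega]; norm_num
    have s0 : (-1:ℤ)^(c+2*b+10) = 1 := by rw [negpow, show (c+2*b+10) % 2 = 0 from by omega]; norm_num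
    have s4 : (-1:ℤ)^(b+4) = (-1) := by rw [negpow, show (b+4) % 2 = 1 from by omega]; norm_num
    have s3 : (-1:ℤ)^(b+3) = 1 := by rw [negpow, show (b+3) % 2 = 0 from by omega]; norm_num
    have s2 : (-1:ℤ)^(b+2) = (-1) := by rw [negpow, show (b+2) % 2 = 1 from by omega]; norm_num
    have s1 : (-1:ℤ)^(b+1) = 1 := by rw [negpow, show (b+1) % 2 = 0 from by omega]; norm_num
    have hX : (48 * (d4 (c+2*b+10) - d4 (b+4) - d4 (b+3) - d4 (b+2) - d4 (b+1)) -
        2*(2*(c:ℤ)+1+3*(-1:ℤ)^c)*((c:ℤ)+(b:ℤ)+5)) =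
        ee (c+2*b+10) - ee (b+4) - ee (b+3) - ee (b+2) - ee (b+1) +
        (-3*(c:ℤ)^2 + 7*(c:ℤ) - 3*1*(c:ℤ) + 60 - 6*(-1)) := by
      simp only [ee, Qp, s0, s4, s3, s2, s1, st, su]
      push_cast
      ring
    rw [hX, abs_le] at *
    constructor <;> nlinarith [sq_nonneg ((c:ℤ))]
  · have st : (-1:ℤ)^c = (-1) := by rw [negpow, show c % 2 = 1 from by omega]; norm_num
    have su : (-1:ℤ)^b = 1 := by rw [negpow, show b % 2 = 0 from by omega]; norm_num
    have s0 : (-1:ℤ)^(c+2*b+10) = (-1) := by rw [negpow, show (c+2*b+10) % 2 = 1 from by omega]; norm_num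
    have s4 : (-1:ℤ)^(b+4) = 1 := by rw [negpow, show (b+4) % 2 = 0 from by omega]; norm_num
    have s3 : (-1:ℤ)^(b+3) = (-1) := by rw [negpow, show (b+3) % 2 = 1 from by omega]; norm_num
    have s2 : (-1:ℤ)^(b+2) = 1 := by rw [negpow, show (b+2) % 2 = 0 from by omega]; norm_num
    have s1 : (-1:ℤ)^(b+1) = (-1) := by rw [negpow, show (b+1) % 2 = 1 from by omega]; norm_num
    have hX : (48 * (d4 (c+2*b+10) - d4 (b+4) - d4 (b+3) - d4 (b+2) - d4 (b+1)) -
        2*(2*(c:ℤ)+1+3*(-1:ℤ)^c)*((c:ℤ)+(b:ℤ)+5)) =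
        ee (c+2*b+10) - ee (b+4) - ee (b+3) - ee (b+2) - ee (b+1) +
        (-3*(c:ℤ)^2 + 7*(c:ℤ) - 3*(-1)*(c:ℤ) + 60 - 6*1) := by
      simp only [ee, Qp, s0, s4, s3, s2, s1, st, su]
      push_cast
      ring
    rw [hX, abs_le] at *
    constructor <;> nlinarith [sq_nonneg ((c:ℤ))]
  · have st : (-1:ℤ)^c = (-1) := by rw [negpow, show c % 2 = 1 from by omega]; norm_num
    have su : (-1:ℤ)^b = (-1) := by rw [negpow, show b % 2 = 1 from by omega]; norm_num
    have s0 : (-1:ℤ)^(c+2*b+10) = (-1) := by rw [negpow, show (c+2*b+10) % 2 = 1 from by omega]; norm_num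
    have s4 : (-1:ℤ)^(b+4) = (-1) := by rw [negpow, show (b+4) % 2 = 1 from by omega]; norm_num
    have s3 : (-1:ℤ)^(b+3) = 1 := by rw [negpow, show (b+3) % 2 = 0 from by omega]; norm_num
    have s2 : (-1:ℤ)^(b+2) = (-1) := by rw [negpow, show (b+2) % 2 = 1 from by omega]; norm_num
    have s1 : (-1:ℤ)^(b+1) = 1 := by rw [negpow, show (b+1) % 2 = 0 from by omega]; norm_num
    have hX : (48 * (d4 (c+2*b+10) - d4 (b+4) - d4 (b+3) - d4 (b+2) - d4 (b+1)) -
        2*(2*(c:ℤ)+1+3*(-1:ℤ)^c)*((c:ℤ)+(b:ℤ)+5)) =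
        ee (c+2*b+10) - ee (b+4) - ee (b+3) - ee (b+2) - ee (b+1) +
        (-3*(c:ℤ)^2 + 7*(c:ℤ) - 3*(-1)*(c:ℤ) + 60 - 6*(-1)) := by
      simp only [ee, Qp, s0, s4, s3, s2, s1, st, su]
      push_cast
      ring
    rw [hX, abs_le] at *
    constructor <;> nlinarith [sq_nonneg ((c:ℤ))]

noncomputable def F : PowerSeries ℤ := PowerSeries.mk d4

open PowerSeries in
lemma FE : F * (1 - X^2 - X^3 - X^4 + X^5 + X^6 + X^7 - X^9) = 1 := by
  ext n
  simp only [mul_sub, mul_add, mul_one, map_sub, map_add, PowerSeries.coeff_mul_X_pow',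
    PowerSeries.coeff_one]
  rcases (by omega : n ≤ 8 ∨ 9 ≤ n) with h | h
  · interval_cases n <;> norm_num [F, d4]
  · obtain ⟨m, rfl⟩ : ∃ m, n = m + 9 := ⟨n - 9, by omega⟩
    rw [if_pos (by omega), if_pos (by omega), if_pos (by omega), if_pos (by omega),
      if_pos (by omega), if_pos (by omega), if_pos (by omega), if_neg (by omega)]
    have h9 : m + 9 - 9 = m := by omega
    have h2 : m + 9 - 2 = m + 7 := by omega
    have h3 : m + 9 - 3 = m + 6 := by omega
    have h4 : m + 9 - 4 = m + 5 := by omega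
    have h5 : m + 9 - 5 = m + 4 := by omega
    have h6 : m + 9 - 6 = m + 3 := by omega
    have h7 : m + 9 - 7 = m + 2 := by omega
    rw [h9, h2, h3, h4, h5, h6, h7]
    simp only [F, PowerSeries.coeff_mk]
    rw [show d4 (m+9) = d4 (m+7) + d4 (m+6) + d4 (m+5) - d4 (m+4) - d4 (m+3) - d4 (m+2) + d4 m from rfl]
    ring

lemma Fdef (n : ℕ) : PowerSeries.coeff n F = d4 n := PowerSeries.coeff_mk n d4

open PowerSeries in
lemma main_id (c b : ℕ) (Ga : Polynomial ℤ)
    (h : Ga * ∏ i ∈ Finset.range 4, (1 - Polynomial.X ^ (i + 1)) =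
      ∏ i ∈ Finset.range 4, (1 - Polynomial.X ^ ((c+b+5) + i + 1))) :
    Ga.coeff (c+2*b+10) - Ga.coeff (c+2*b+9) =
      d4 (c+2*b+10) - d4 (b+4) - d4 (b+3) - d4 (b+2) - d4 (b+1) := by
  have h2 := congrArg (fun p : Polynomial ℤ => (p : ℤ⟦X⟧)) h
  simp only [Finset.prod_range_succ, Finset.prod_range_zero, one_mul,
    Polynomial.coe_mul, Polynomial.coe_sub, Polynomial.coe_pow, Polynomial.coe_X,
    Polynomial.coe_one] at h2
  have hps2 : ((Ga : ℤ⟦X⟧) - (Ga : ℤ⟦X⟧) * X) =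
      F - F*X^(c+b+6) - F*X^(c+b+7) - F*X^(c+b+8) - F*X^(c+b+9)
      + F*X^(2*c+2*b+13) + F*X^(2*c+2*b+14) + F*X^(2*c+2*b+15) + F*X^(2*c+2*b+15)
      + F*X^(2*c+2*b+16) + F*X^(2*c+2*b+17)
      - F*X^(3*c+3*b+21) - F*X^(3*c+3*b+22) - F*X^(3*c+3*b+23) - F*X^(3*c+3*b+24)
      + F*X^(4*c+4*b+30) := by
    linear_combination F * h2 - ((Ga : ℤ⟦X⟧) * (1 - X)) * FE
  have h3 := congrArg (PowerSeries.coeff (c+2*b+10)) hps2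
  simp only [map_sub, map_add, PowerSeries.coeff_mul_X_pow', Polynomial.coeff_coe,
    pow_one, Fdef] at h3
  rw [if_pos (by omega : c+b+6 ≤ c+2*b+10), if_pos (by omega : c+b+7 ≤ c+2*b+10),
      if_pos (by omega : c+b+8 ≤ c+2*b+10), if_pos (by omega : c+b+9 ≤ c+2*b+10),
      if_neg (by omega : ¬ 2*c+2*b+13 ≤ c+2*b+10), if_neg (by omega : ¬ 2*c+2*b+14 ≤ c+2*b+10),
      if_neg (by omega : ¬ 2*c+2*b+15 ≤ c+2*b+10), if_neg (by omega : ¬ 2*c+2*b+16 ≤ c+2*b+10),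
      if_neg (by omega : ¬ 2*c+2*b+17 ≤ c+2*b+10), if_neg (by omega : ¬ 3*c+3*b+21 ≤ c+2*b+10),
      if_neg (by omega : ¬ 3*c+3*b+22 ≤ c+2*b+10), if_neg (by omega : ¬ 3*c+3*b+23 ≤ c+2*b+10),
      if_neg (by omega : ¬ 3*c+3*b+24 ≤ c+2*b+10), if_neg (by omega : ¬ 4*c+4*b+30 ≤ c+2*b+10)] at h3
  rw [show c+2*b+10 - (c+b+6) = b+4 by omega, show c+2*b+10 - (c+b+7) = b+3 by omega,
    show c+2*b+10 - (c+b+8) = b+2 by omega, show c+2*b+10 - (c+b+9) = b+1 by omega] at h3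
  rw [show c+2*b+10 = (c+2*b+9)+1 by omega, PowerSeries.coeff_succ_mul_X,
    Polynomial.coeff_coe] at h3
  rw [show (c+2*b+9)+1 = c+2*b+10 by omega] at h3
  omega

lemma zc (P : Polynomial ℤ) (n : ℕ) : zcoeffZ P ((n : ℤ)) = P.coeff n := by
  rw [zcoeffZ, if_pos (by positivity), Int.toNat_natCast]

/-- For every nonnegative integer `c`, as `a → ∞`,
`([q^{2a-c}] - [q^{2a-c-1}]) (a+4 choose 4)_q = (1/24)(2c + 1 + 3·(-1)^c) a + O(1)`,
where the Gaussian binomial coefficient `G a = (a+4 choose 4)_q` is characterized by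
`G a · ∏_{i=1}^4 (1-q^i) = ∏_{i=1}^4 (1-q^{a+i})`. -/
theorem gauss_four_coeff_difference_asymptotics (c : ℕ) (G : ℕ → Polynomial ℤ)
    (hG : ∀ a, G a * ∏ i ∈ Finset.range 4, (1 - Polynomial.X ^ (i + 1)) =
      ∏ i ∈ Finset.range 4, (1 - Polynomial.X ^ (a + i + 1))) :
    ∃ (C : ℝ) (_ : 0 < C) (A : ℕ), ∀ a ≥ A,
      |((zcoeffZ (G a) ((2 * a : ℕ) - (c : ℤ)) -
            zcoeffZ (G a) ((2 * a : ℕ) - (c : ℤ) - 1) : ℤ) : ℝ) -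
          (1 / 24) * (2 * c + 1 + 3 * (-1 : ℝ) ^ c) * a| ≤ C := by
  refine ⟨(306 : ℝ) + 3*(c:ℝ)^2 + 10*(c:ℝ), by positivity, c + 5, ?_⟩
  intro a ha
  obtain ⟨b, rfl⟩ : ∃ b, a = c + b + 5 := ⟨a - c - 5, by omega⟩
  have e1 : ((2 * (c+b+5) : ℕ) : ℤ) - (c : ℤ) = ((c+2*b+10 : ℕ) : ℤ) := by push_cast; ring
  have e2 : ((2 * (c+b+5) : ℕ) : ℤ) - (c : ℤ) - 1 = ((c+2*b+9 : ℕ) : ℤ) := by push_cast; ring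
  rw [e2, e1, zc, zc]
  have hmain := main_id c b (G (c+b+5)) (hG (c+b+5))
  have hkey := key c b
  rw [← hmain] at hkey
  set Δ : ℤ := (G (c+b+5)).coeff (c+2*b+10) - (G (c+b+5)).coeff (c+2*b+9) with hΔ
  have h48 : (48:ℝ) * (((Δ):ℝ) - (1/24) * (2*(c:ℝ)+1+3*(-1:ℝ)^c) * ((c+b+5 : ℕ):ℝ)) =
      ((48 * Δ - 2*(2*(c:ℤ)+1+3*(-1:ℤ)^c)*((c:ℤ)+(b:ℤ)+5) : ℤ) : ℝ) := by
    push_cast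
    ring
  have habs : |(48:ℝ) * (((Δ):ℝ) - (1/24) * (2*(c:ℝ)+1+3*(-1:ℝ)^c) * ((c+b+5 : ℕ):ℝ))|
      ≤ (306 : ℝ) + 3*(c:ℝ)^2 + 10*(c:ℝ) := by
    rw [h48, ← Int.cast_abs]
    have : ((|48 * Δ - 2*(2*(c:ℤ)+1+3*(-1:ℤ)^c)*((c:ℤ)+(b:ℤ)+5)| : ℤ) : ℝ)
        ≤ ((306 + 3*(c:ℤ)^2 + 10*(c:ℤ) : ℤ) : ℝ) := by exact_mod_cast hkey
    calc _ ≤ ((306 + 3*(c:ℤ)^2 + 10*(c:ℤ) : ℤ) : ℝ) := this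
    _ = (306 : ℝ) + 3*(c:ℝ)^2 + 10*(c:ℝ) := by push_cast; ring
  rw [abs_mul] at habs
  have h48' : |(48:ℝ)| = 48 := by norm_num
  rw [h48'] at habs
  have hnn : (0:ℝ) ≤ |((Δ):ℝ) - (1/24) * (2*(c:ℝ)+1+3*(-1:ℝ)^c) * ((c+b+5 : ℕ):ℝ)| := abs_nonneg _
  have goal' : |((Δ):ℝ) - (1/24) * (2*(c:ℝ)+1+3*(-1:ℝ)^c) * ((c+b+5 : ℕ):ℝ)|
      ≤ (306 : ℝ) + 3*(c:ℝ)^2 + 10*(c:ℝ) := by linarith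
  convert goal' using 2
end
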